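/- Assume f̂^≤(x) < ∞ for all x ∈ X. Let s : [0,1] → ℝ be any function satisfying r^<(s(q)) ≤ q ≤ r^≤(s(q)) for all q ∈ [0,1]. Fix m ∈ X and set p = r^<(f(m)), the probability that a sample x ~ P strictly improves on m. Then for every q ∈ [0,p]: (i) P({x ∈ X | f̂^<(x) + (p − r^<(s(q)))/u ≤ f̂^<(m)}) ≥ q, and (ii) P({x ∈ X | f̂^≤(x) + (p − r^≤(s(q)))/u + Λ(L_f(m)) ≤ f̂^≤(m)}) ≥ q. -/

import Mathlib

open MeasureTheory Set

/-- Probability of strict improvement below level `z`: `r^<(z) = P {x | f x < z}` (as a real). -/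
noncomputable def rLT {X : Type*} [MeasurableSpace X] (P : Measure X) (f : X → ℝ) (z : ℝ) : ℝ :=
  (P {x | f x < z}).toReal

/-- Probability of weak improvement below level `z`: `r^≤(z) = P {x | f x ≤ z}` (as a real). -/
noncomputable def rLE {X : Type*} [MeasurableSpace X] (P : Measure X) (f : X → ℝ) (z : ℝ) : ℝ :=
  (P {x | f x ≤ z}).toReal

lemma quantile_aux {X : Type*} [MeasurableSpace X] (Λ P : Measure X) [IsFiniteMeasure P]
    (u : ℝ) (hu : 0 < u)
    (hPu : ∀ A : Set X, MeasurableSet A → P A ≤ ENNReal.ofReal u * Λ A)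
    {A B C : Set X} (hAB : A ⊆ B) (hBC : B ⊆ C)
    (hBm : MeasurableSet B) (hCm : MeasurableSet C) :
    Λ A + ENNReal.ofReal (((P C).toReal - (P B).toReal) / u) ≤ Λ C := by
  set D := C \ B with hD
  have hDm : MeasurableSet D := hCm.diff hBm
  have h1 : (P C).toReal - (P B).toReal ≤ (P D).toReal := by
    have hPC : P C ≤ P B + P D := by
      calc P C = P (B ∪ D) := by rw [union_diff_cancel hBC]
        _ ≤ P B + P D := measure_union_le _ _
    have h2 := (ENNReal.toReal_le_toReal (measure_ne_top P C)
      (by exact ENNReal.add_ne_top.mpr ⟨measure_ne_top P B, measure_ne_top P D⟩)).mpr hPC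
    rw [ENNReal.toReal_add (measure_ne_top P B) (measure_ne_top P D)] at h2
    linarith
  have h2 : ENNReal.ofReal (((P C).toReal - (P B).toReal) / u) ≤ Λ D := by
    rcases eq_or_ne (Λ D) ⊤ with h | h
    · simp [h]
    · have hP : (P D).toReal ≤ u * (Λ D).toReal := by
        have h3 := hPu D hDm
        have h4 := (ENNReal.toReal_le_toReal (measure_ne_top P D)
          (ENNReal.mul_ne_top ENNReal.ofReal_ne_top h)).mpr h3
        rwa [ENNReal.toReal_mul, ENNReal.toReal_ofReal hu.le] at h4
      rw [← ENNReal.ofReal_toReal h]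
      apply ENNReal.ofReal_le_ofReal
      rw [div_le_iff₀ hu]
      nlinarith [h1]
  calc Λ A + ENNReal.ofReal (((P C).toReal - (P B).toReal) / u)
      ≤ Λ B + Λ D := add_le_add (measure_mono hAB) h2
    _ = Λ (B ∪ D) := (measure_union disjoint_sdiff_right hDm).symm
    _ = Λ C := by rw [union_diff_cancel hBC]

/-- Quantile bounds for the decrease of the spatial suboptimality
functions `f̂^<(x) = Λ {x' | f x' < f x}` and `f̂^≤(x) = Λ {x' | f x' ≤ f x}` under a
sample `x ∼ P`, where `P` has density bounded by `u` w.r.t. `Λ`, and `s` is a measurable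
inverse of the improvement-probability functions: for every `q ∈ [0, p]`, with
`p = r^<(f m)`, the `q`-quantile of the `f̂^<`-decrease is at least `(p − r^<(s q))/u`,
and the `q`-quantile of the `f̂^≤`-decrease is at least `(p − r^≤(s q))/u + Λ(L_f(m))`. -/
theorem quantile_decrease
    {X : Type*} [MeasurableSpace X] (Λ : Measure X) [SigmaFinite Λ]
    (P : Measure X) [IsProbabilityMeasure P]
    (f : X → ℝ) (hf : Measurable f)
    (hfin : ∀ x : X, Λ {x' | f x' ≤ f x} < ⊤)
    (u : ℝ) (hu : 0 < u)
    (hPu : ∀ A : Set X, MeasurableSet A → P A ≤ ENNReal.ofReal u * Λ A)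
    (s : ℝ → ℝ) (hs : ∀ q ∈ Icc (0 : ℝ) 1, rLT P f (s q) ≤ q ∧ q ≤ rLE P f (s q))
    (m : X) :
    ∀ q ∈ Icc (0 : ℝ) (rLT P f (f m)),
      ENNReal.ofReal q ≤
        P {x | Λ {x' | f x' < f x} + ENNReal.ofReal ((rLT P f (f m) - rLT P f (s q)) / u)
            ≤ Λ {x' | f x' < f m}} ∧
      ENNReal.ofReal q ≤
        P {x | Λ {x' | f x' ≤ f x} + ENNReal.ofReal ((rLT P f (f m) - rLE P f (s q)) / u)
            + Λ {x' | f x' = f m} ≤ Λ {x' | f x' ≤ f m}} := by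
  intro q hq
  obtain ⟨hq0, hqp⟩ := hq
  have hp1 : rLT P f (f m) ≤ 1 := by
    simpa [rLT] using
      ENNReal.toReal_le_of_le_ofReal zero_le_one (by simpa using prob_le_one (μ := P))
  obtain ⟨hs1, hs2⟩ := hs q ⟨hq0, hqp.trans hp1⟩
  -- measurability facts
  have hMlt : ∀ c : ℝ, MeasurableSet {x | f x < c} := fun c => hf measurableSet_Iio
  have hMle : ∀ c : ℝ, MeasurableSet {x | f x ≤ c} := fun c => hf measurableSet_Iic
  have hofq : ∀ E : Set X, q ≤ (P E).toReal → ENNReal.ofReal q ≤ P E := by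
    intro E hE
    exact ENNReal.ofReal_le_of_le_toReal hE
  have hsum : Λ {x' | f x' < f m} + Λ {x' | f x' = f m} = Λ {x' | f x' ≤ f m} := by
    rw [← measure_union (by
        intro t ht1 ht2 x hx
        exact absurd ((ht2 hx) : f x = f m) (ne_of_lt (ht1 hx)))
      (show MeasurableSet {x' | f x' = f m} from hf (measurableSet_singleton _))]
    congr 1
    ext x
    simp [le_iff_lt_or_eq]
  constructor
  · -- strict version
    rcases le_or_gt (s q) (f m) with hsm | hsm
    · refine le_trans (hofq _ hs2) (measure_mono fun x hx => ?_)
      exact quantile_aux Λ P u hu hPu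
        (fun x' (h : f x' < f x) => lt_of_lt_of_le h hx)
        (fun x' (h : f x' < s q) => lt_of_lt_of_le h hsm)
        (hMlt _) (hMlt _)
    · have hle : rLT P f (f m) ≤ rLT P f (s q) := by
        apply ENNReal.toReal_mono (measure_ne_top P _)
        exact measure_mono fun x' (h : f x' < f m) => h.trans hsm
      have hz : ENNReal.ofReal ((rLT P f (f m) - rLT P f (s q)) / u) = 0 :=
        ENNReal.ofReal_eq_zero.mpr (by rw [div_nonpos_iff]; right; exact ⟨by linarith, hu.le⟩)
      refine le_trans (hofq {x | f x < f m} hqp) (measure_mono fun x hx => ?_)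
      simp only [mem_setOf_eq, hz, add_zero]
      exact measure_mono fun x' (h : f x' < f x) => h.trans hx
  · -- weak version
    rcases lt_or_ge (s q) (f m) with hsm | hsm
    · refine le_trans (hofq _ hs2) (measure_mono fun x hx => ?_)
      have key : Λ {x' | f x' ≤ f x} +
          ENNReal.ofReal ((rLT P f (f m) - rLE P f (s q)) / u) ≤ Λ {x' | f x' < f m} :=
        quantile_aux Λ P u hu hPu
          (fun x' (h : f x' ≤ f x) => h.trans hx)
          (fun x' (h : f x' ≤ s q) => lt_of_le_of_lt h hsm)
          (hMle _) (hMlt _)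
      calc Λ {x' | f x' ≤ f x} + ENNReal.ofReal ((rLT P f (f m) - rLE P f (s q)) / u)
            + Λ {x' | f x' = f m}
          ≤ Λ {x' | f x' < f m} + Λ {x' | f x' = f m} := add_le_add_left key _
        _ = Λ {x' | f x' ≤ f m} := hsum
    · have hle : rLT P f (f m) ≤ rLE P f (s q) := by
        apply ENNReal.toReal_mono (measure_ne_top P _)
        exact measure_mono fun x' (h : f x' < f m) => le_of_lt (h.trans_le hsm)
      have hz : ENNReal.ofReal ((rLT P f (f m) - rLE P f (s q)) / u) = 0 :=
        ENNReal.ofReal_eq_zero.mpr (by rw [div_nonpos_iff]; right; exact ⟨by linarith, hu.le⟩)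
      refine le_trans (hofq {x | f x < f m} hqp) (measure_mono fun x hx => ?_)
      simp only [mem_setOf_eq, hz, add_zero]
      calc Λ {x' | f x' ≤ f x} + Λ {x' | f x' = f m}
          ≤ Λ {x' | f x' < f m} + Λ {x' | f x' = f m} :=
            add_le_add_left (measure_mono fun x' (h : f x' ≤ f x) => h.trans_lt hx) _
        _ = Λ {x' | f x' ≤ f m} := hsum
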